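/- (Pointwise inequality underlying Theorem 2.) Let d ≥ 1 and let B be a nonempty finite type. Let (p_b, ρ_b)_{b∈B} be an ensemble of density matrices on ℂ^d, let (R_b)_{b∈B} be nonnegative reals, and let σ_b := (1+R_b)⁻¹ · (ρ_b + (R_b/d) · I). Then for every POVM (M_b)_{b∈B} on ℂ^d, (max_{b∈B} R_b · p_b) + ∑_{b∈B} p_b · Re Tr(M_b ρ_b) ≥ (1 + min_{b∈B} R_b) · ∑_{b∈B} p_b · Re Tr(M_b σ_b). -/

import Mathlib

open Matrix
open scoped ComplexOrder

lemma psd_trace_nonneg {n : Type*} [Fintype n] [DecidableEq n] {A : Matrix n n ℂ}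
    (hA : A.PosSemidef) : 0 ≤ A.trace := by
  rw [Matrix.trace]
  apply Finset.sum_nonneg
  intro i _
  exact hA.diag_nonneg

open scoped MatrixOrder in
lemma trace_mul_psd_nonneg {n : Type*} [Fintype n] [DecidableEq n] {A B : Matrix n n ℂ}
    (hA : A.PosSemidef) (hB : B.PosSemidef) : 0 ≤ (A * B).trace := by
  have h1 : A * B = A * (CFC.sqrt B * CFC.sqrt B) := by rw [CFC.sqrt_mul_sqrt_self B hB.nonneg]
  have h2 : (A * B).trace = ((CFC.sqrt B)ᴴ * A * CFC.sqrt B).trace := by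
    rw [h1, ← mul_assoc, Matrix.trace_mul_cycle, (CFC.sqrt_nonneg B).posSemidef.1.eq, mul_assoc,
      ← mul_assoc]
  rw [h2]
  exact psd_trace_nonneg (hA.conjTranspose_mul_mul_same (CFC.sqrt B))


/-- A density matrix: positive semidefinite with unit trace. -/
def IsDensityMatrix {n : Type*} [Fintype n] [DecidableEq n] (ρ : Matrix n n ℂ) : Prop :=
  ρ.PosSemidef ∧ ρ.trace = 1

/-- A POVM: a family of positive semidefinite matrices summing to the identity. -/
def IsPOVM {n B : Type*} [Fintype n] [DecidableEq n] [Fintype B]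
    (M : B → Matrix n n ℂ) : Prop :=
  (∀ b, (M b).PosSemidef) ∧ ∑ b, M b = 1

theorem stmt4 {d : ℕ} (hd : 1 ≤ d) {B : Type*} [Fintype B] [Nonempty B]
    (p : B → ℝ) (ρ : B → Matrix (Fin d) (Fin d) ℂ)
    (hp : ∀ b, 0 ≤ p b) (hpsum : ∑ b, p b = 1)
    (hρ : ∀ b, IsDensityMatrix (ρ b))
    (R : B → ℝ) (hR : ∀ b, 0 ≤ R b)
    (σ : B → Matrix (Fin d) (Fin d) ℂ)
    (hσ : ∀ b, σ b = ((1 + R b)⁻¹ : ℝ) •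
      (ρ b + ((R b / d : ℝ)) • (1 : Matrix (Fin d) (Fin d) ℂ)))
    (M : B → Matrix (Fin d) (Fin d) ℂ) (hM : IsPOVM M) :
    (Finset.univ.sup' Finset.univ_nonempty fun b => R b * p b) +
        ∑ b, p b * ((M b * ρ b).trace).re ≥
      (1 + Finset.univ.inf' Finset.univ_nonempty R) *
        ∑ b, p b * ((M b * σ b).trace).re := by
  set t : B → ℝ := fun b => ((M b * ρ b).trace).re with ht_def
  set m : B → ℝ := fun b => ((M b).trace).re with hm_def
  set S : ℝ := Finset.univ.sup' Finset.univ_nonempty fun b => R b * p b with hS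
  set I : ℝ := Finset.univ.inf' Finset.univ_nonempty R with hI
  have hdpos : (0:ℝ) < d := by exact_mod_cast hd
  have hσre : ∀ b, ((M b * σ b).trace).re = (1 + R b)⁻¹ * (t b + R b / d * m b) := by
    intro b
    rw [hσ b, Matrix.mul_smul, Matrix.mul_add, Matrix.mul_smul, Matrix.mul_one,
      Matrix.trace_smul, Matrix.trace_add, Matrix.trace_smul]
    simp only [Complex.smul_re, Complex.add_re, smul_eq_mul]
    rfl
  have ht : ∀ b, 0 ≤ t b := fun b => by
    have := trace_mul_psd_nonneg (hM.1 b) (hρ b).1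
    exact (Complex.le_def.mp this).1
  have hm : ∀ b, 0 ≤ m b := fun b => by
    have := psd_trace_nonneg (hM.1 b)
    exact (Complex.le_def.mp this).1
  have hmsum : ∑ b, m b = (d : ℝ) := by
    have : (∑ b, (M b).trace) = (d : ℂ) := by
      rw [← Matrix.trace_sum, hM.2]
      simp [Matrix.trace_one]
    calc ∑ b, m b = (∑ b, (M b).trace).re := by simp [hm_def, Complex.re_sum]
      _ = (d : ℝ) := by rw [this]; simp
  have key : ∀ b, (1 + I) * (p b * ((1 + R b)⁻¹ * (t b + R b / d * m b))) ≤
      p b * t b + S * (m b / d) := by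
    intro b
    have hIb : I ≤ R b := Finset.inf'_le _ (Finset.mem_univ b)
    have hSb : R b * p b ≤ S := by
      rw [hS]; exact Finset.le_sup' (fun b => R b * p b) (Finset.mem_univ b)
    have hRb : (0:ℝ) < 1 + R b := by linarith [hR b]
    have hc : (1 + I) * (1 + R b)⁻¹ ≤ 1 := by
      rw [mul_inv_le_iff₀ hRb, one_mul]; linarith
    have hc0 : 0 ≤ (1 + I) * (1 + R b)⁻¹ := by
      have hI0 : 0 ≤ I := Finset.le_inf' _ _ fun b _ => hR b
      positivity
    have hq : 0 ≤ p b * (t b + R b / d * m b) := by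
      have : 0 ≤ R b / d * m b := mul_nonneg (div_nonneg (hR b) hdpos.le) (hm b)
      have := ht b
      nlinarith [hp b]
    calc (1 + I) * (p b * ((1 + R b)⁻¹ * (t b + R b / d * m b)))
        = ((1 + I) * (1 + R b)⁻¹) * (p b * (t b + R b / d * m b)) := by ring
      _ ≤ 1 * (p b * (t b + R b / d * m b)) := by
          exact mul_le_mul_of_nonneg_right hc hq
      _ = p b * t b + (R b * p b) * (m b / d) := by ring
      _ ≤ p b * t b + S * (m b / d) := by
          have : 0 ≤ m b / d := div_nonneg (hm b) hdpos.le
          nlinarith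
  have main : (1 + I) * ∑ b, p b * ((M b * σ b).trace).re ≤ S + ∑ b, p b * t b := by
    calc (1 + I) * ∑ b, p b * ((M b * σ b).trace).re
        = ∑ b, (1 + I) * (p b * ((1 + R b)⁻¹ * (t b + R b / d * m b))) := by
          rw [Finset.mul_sum]
          exact Finset.sum_congr rfl fun b _ => by rw [hσre b]
      _ ≤ ∑ b, (p b * t b + S * (m b / d)) := Finset.sum_le_sum fun b _ => key b
      _ = ∑ b, p b * t b + S * ((∑ b, m b) / d) := by
          rw [Finset.sum_add_distrib]
          congr 1
          rw [Finset.sum_div, Finset.mul_sum]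
      _ = ∑ b, p b * t b + S := by
          rw [hmsum, div_self (ne_of_gt hdpos), mul_one]
      _ = S + ∑ b, p b * t b := by ring
  exact main
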